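/- Let A be a finite nonempty set with A = |A| elements and let T ≥ 1 be an integer. For t = 1,…,T+1 let η_t : A → (0, ∞) satisfy η_{t+1}(a) ≤ η_t(a) for all t ≤ T and a ∈ A, with η_1(a) = η₁ constant in a; for t = 1,…,T let ℓ_t : A → ℝ and x_t ∈ ℝ; for t = 1,…,T+1 let m_t : A → ℝ. For t = 1,…,T+1 let p_t be a probability vector on A with p_t(a) > 0 for all a, which minimizes p ↦ Σ_{a∈A} p(a)·(Σ_{τ=1}^{t−1} ℓ_τ(a) + m_t(a)) + Σ_{a∈A} (1/η_t(a))·ln(1/p(a)) over the probability simplex on A. Assume that η_t(a)·p_t(a)·(ℓ_t(a) − m_t(a) + x_t) ≥ −1/2 for all t ≤ T and all a ∈ A. Then for every probability vector u on A: Σ_{t=1}^{T} Σ_{a∈A} (p_t(a) − u(a))·ℓ_t(a) ≤ A·ln(A·T²)/η₁ + Σ_{t=1}^{T} Σ_{a∈A} (1/η_{t+1}(a) − 1/η_t(a))·ln(A·T²) + Σ_{t=1}^{T} Σ_{a∈A} η_t(a)·p_t(a)²·(ℓ_t(a) − m_t(a) + x_t)² + (1/T²)·Σ_{t=1}^{T}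 Σ_{a∈A} (−u(a) + 1/A)·ℓ_t(a) + 2·max_{a∈A} |m_{T+1}(a)|. -/

import Mathlib

lemma log_one_add_ge {z : ℝ} (hz : -(1/2) ≤ z) : z - z^2 ≤ Real.log (1+z) := by
  have h1z : (0:ℝ) < 1 + z := by linarith
  rcases le_or_gt 0 z with hz0 | hz0
  · have h1 : 1 - (1+z)⁻¹ ≤ Real.log (1+z) := Real.one_sub_inv_le_log_of_pos h1z
    have h2 : z - z^2 ≤ 1 - (1+z)⁻¹ := by
      have hc : (1+z) * (1+z)⁻¹ = 1 := mul_inv_cancel₀ h1z.ne'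
      nlinarith [sq_nonneg z, mul_pos h1z h1z]
    linarith
  · -- z ∈ [-1/2, 0): use antitonicity of f t = log(1+t) - t + t²
    set f : ℝ → ℝ := fun t => Real.log (1+t) - t + t^2 with hf
    have key : AntitoneOn f (Set.Icc (-(1/2)) 0) := by
      apply antitoneOn_of_hasDerivWithinAt_nonpos (convex_Icc _ _)
        (f' := fun t => (1+t)⁻¹ - 1 + 2*t)
      · apply ContinuousOn.add
        apply ContinuousOn.sub
        · apply ContinuousOn.log (by fun_prop)
          intro t ht
          simp only [Set.mem_Icc] at ht
          nlinarith [ht.1]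
        · fun_prop
        · fun_prop
      · intro t ht
        rw [interior_Icc] at ht
        simp only [Set.mem_Ioo] at ht
        have h1t : (0:ℝ) < 1 + t := by linarith
        have : HasDerivAt (fun t : ℝ => Real.log (1+t) - t + t^2) ((1+t)⁻¹ - 1 + 2*t) t := by
          have hlog : HasDerivAt (fun t : ℝ => Real.log (1+t)) ((1+t)⁻¹) t := by
            have h := ((hasDerivAt_id t).const_add 1).log h1t.ne'
            simp only [id_eq] at h
            simpa [one_div] using h
          exact ((hlog.sub (hasDerivAt_id t)).add
            (hasDerivAt_pow 2 t)).congr_deriv (by push_cast; ring)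
        exact this.hasDerivWithinAt
      · intro t ht
        rw [interior_Icc] at ht
        simp only [Set.mem_Ioo] at ht
        have h1t : (0:ℝ) < 1 + t := by linarith
        have : (1+t) * ((1+t)⁻¹ - 1 + 2*t) = t * (1 + 2*t) := by
          field_simp; ring
        nlinarith [ht.1, ht.2]
    have := key (Set.mem_Icc.mpr ⟨hz, hz0.le⟩) (Set.mem_Icc.mpr ⟨by norm_num, le_refl 0⟩) hz0.le
    simp only [hf, add_zero, Real.log_one] at this
    linarith



lemma stab_pointwise {p q g e : ℝ} (hp : 0 < p) (hq : 0 < q) (he : 0 < e)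
    (hz : -(1/2) ≤ e * p * g) :
    (p - q) * g - (1/e) * (Real.log (p/q) + q/p - 1) ≤ e * p^2 * g^2 := by
  set z : ℝ := e * p * g with hzdef
  have h1z : (0:ℝ) < 1 + z := by linarith
  have hqs : (0:ℝ) < p / (1+z) := div_pos hp h1z
  -- key algebraic identity
  have hid : (p - q) * g - (1/e) * (Real.log (p/q) + q/p - 1)
      = (1/e) * (z - Real.log (1+z)) + (1/e) * (Real.log (q/(p/(1+z))) - (q/(p/(1+z)) - 1)) := by
    rw [Real.log_div hp.ne' hq.ne', Real.log_div hq.ne' hqs.ne',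
        Real.log_div hp.ne' h1z.ne']
    have hg : g = z / (e * p) := by
      rw [hzdef]; field_simp
    rw [hg]
    field_simp
    ring
  rw [hid]
  have h1 : z - Real.log (1+z) ≤ z^2 := by
    have := log_one_add_ge (z := z) hz
    linarith
  have h2 : Real.log (q/(p/(1+z))) - (q/(p/(1+z)) - 1) ≤ 0 := by
    have := Real.log_le_sub_one_of_pos (div_pos hq hqs)
    linarith
  have h3 : (1/e) * (z - Real.log (1+z)) ≤ (1/e) * z^2 :=
    mul_le_mul_of_nonneg_left h1 (by positivity)
  have h4 : (1/e) * (Real.log (q/(p/(1+z))) - (q/(p/(1+z)) - 1)) ≤ 0 :=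
    mul_nonpos_of_nonneg_of_nonpos (by positivity) h2
  have h5 : (1/e) * z^2 = e * p^2 * g^2 := by
    rw [hzdef]; field_simp
  linarith



open Finset in
lemma ftrl_opt {A : Type*} [Fintype A] [Nonempty A]
    (w c p q : A → ℝ) (hc : ∀ a, 0 < c a)
    (hp : ∀ a, 0 < p a) (hq : ∀ a, 0 < q a)
    (hps : ∑ a, p a = 1) (hqs : ∑ a, q a = 1)
    (hmin : ∀ r : A → ℝ, (∀ a, 0 < r a) → ∑ a, r a = 1 →
      (∑ a, p a * w a) + ∑ a, c a * Real.log (1/p a) ≤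
      (∑ a, r a * w a) + ∑ a, c a * Real.log (1/r a)) :
    (∑ a, p a * w a) + (∑ a, c a * Real.log (1/p a))
      + ∑ a, c a * (Real.log (p a / q a) + q a / p a - 1)
    ≤ (∑ a, q a * w a) + ∑ a, c a * Real.log (1/q a) := by
  classical
  set d : A → ℝ := fun a => (q a - p a) / p a with hd
  set W : ℝ := ∑ a, (q a - p a) * w a with hW
  set K : ℝ := ∑ a, c a * (d a)^2 with hK
  have hK0 : 0 ≤ K := sum_nonneg fun a _ => mul_nonneg (hc a).le (sq_nonneg _)
  set B : ℝ := univ.sup' univ_nonempty (fun a => |d a|) with hB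
  have hBle : ∀ a, |d a| ≤ B := fun a => le_sup' (fun a => |d a|) (mem_univ a)
  have hB0 : 0 ≤ B := le_trans (abs_nonneg _) (hBle (Classical.arbitrary A))
  -- Step i
  have step1 : ∀ s : ℝ, 0 < s → s ≤ 1 → s ≤ 1/(2*(B+1)) → (∑ a, c a * d a) - s * K ≤ W := by
    intro s hs hs1 hsB
    have hsd : ∀ a, -(1/2) ≤ s * d a ∧ s * |d a| ≤ 1/2 := by
      intro a
      have h1 : s * |d a| ≤ (1/(2*(B+1))) * (B+1) := by
        apply mul_le_mul hsB (by linarith [hBle a]) (abs_nonneg _) (by positivity)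
      have h2 : (1/(2*(B+1))) * (B+1) = 1/2 := by field_simp
      have h3 : s * |d a| ≤ 1/2 := by linarith
      constructor
      · have : -(s * |d a|) ≤ s * d a := by
          have := neg_abs_le (d a)
          nlinarith
        linarith
      · exact h3
    set r : A → ℝ := fun a => p a + s * (q a - p a) with hr
    have hrpos : ∀ a, 0 < r a := by
      intro a
      have : r a = (1-s) * p a + s * q a := by rw [hr]; ring
      rw [this]
      rcases eq_or_lt_of_le hs1 with h | h
      · rw [h]; simpa using hq a
      · exact add_pos_of_nonneg_of_pos (mul_nonneg (by linarith) (hp a).le)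
          (mul_pos hs (hq a))
    have hrsum : ∑ a, r a = 1 := by
      simp only [hr, sum_add_distrib, ← mul_sum, sum_sub_distrib, hps, hqs]
      ring
    have hmain := hmin r hrpos hrsum
    -- ∑ c (log (r a / p a)) ≤ s * W
    have hlogsum : ∑ a, c a * Real.log (r a / p a) ≤ s * W := by
      have h1 : ∑ a, r a * w a - ∑ a, p a * w a = s * W := by
        rw [hW, mul_sum, ← sum_sub_distrib]
        congr 1; funext a; rw [hr]; ring
      have h2 : ∀ a, Real.log (r a / p a) = Real.log (1/p a) - Real.log (1/(r a)) := by
        intro a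
        rw [Real.log_div (hrpos a).ne' (hp a).ne', Real.log_div one_ne_zero (hp a).ne',
          Real.log_div one_ne_zero (hrpos a).ne', Real.log_one]
        ring
      calc ∑ a, c a * Real.log (r a / p a)
          = ∑ a, c a * Real.log (1/p a) - ∑ a, c a * Real.log (1/(r a)) := by
            rw [← sum_sub_distrib]; congr 1; funext a; rw [h2 a]; ring
        _ ≤ ∑ a, r a * w a - ∑ a, p a * w a := by linarith
        _ = s * W := h1
    have hper : ∀ a, c a * (s * d a - (s * d a)^2) ≤ c a * Real.log (r a / p a) := by
      intro a
      have hrp : r a / p a = 1 + s * d a := by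
        rw [hr, hd]
        field_simp [(hp a).ne']
      rw [hrp]
      exact mul_le_mul_of_nonneg_left (log_one_add_ge (hsd a).1) (hc a).le
    have hsum2 : ∑ a, c a * (s * d a - (s * d a)^2) ≤ s * W :=
      le_trans (sum_le_sum fun a _ => hper a) hlogsum
    have hexp : ∑ a, c a * (s * d a - (s * d a)^2) = s * ((∑ a, c a * d a) - s * K) := by
      rw [hK, mul_sub, mul_sum, mul_sum, mul_sum, ← sum_sub_distrib]
      congr 1; funext a; ring
    rw [hexp] at hsum2
    exact le_of_mul_le_mul_left (by linarith [hsum2]) hs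
  -- Step ii
  have step2 : ∑ a, c a * d a ≤ W := by
    apply le_of_forall_pos_le_add
    intro ε hε
    set s : ℝ := min (1/(2*(B+1))) (min 1 (ε/(K+1))) with hs
    have hspos : 0 < s := by
      apply lt_min (by positivity) (lt_min one_pos (by positivity))
    have h1 := step1 s hspos (le_trans (min_le_right _ _) (min_le_left _ _)) (min_le_left _ _)
    have h2 : s * K ≤ ε := by
      have hsle : s ≤ ε/(K+1) := le_trans (min_le_right _ _) (min_le_right _ _)
      have : s * K ≤ (ε/(K+1)) * K := mul_le_mul_of_nonneg_right hsle hK0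
      have h3 : (ε/(K+1)) * K ≤ ε := by
        rw [div_mul_eq_mul_div, div_le_iff₀ (by positivity)]
        nlinarith
      linarith
    linarith
  -- Step iii
  have hdec : ∑ a, c a * d a = ∑ a, c a * (q a / p a - 1) := by
    congr 1; funext a; rw [hd]; field_simp [(hp a).ne']
  have hreg : ∑ a, c a * Real.log (1/q a) - ∑ a, c a * Real.log (1/p a)
      = ∑ a, c a * Real.log (p a / q a) := by
    rw [← sum_sub_distrib]; congr 1; funext a
    rw [Real.log_div (hp a).ne' (hq a).ne', Real.log_div one_ne_zero (hp a).ne',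
      Real.log_div one_ne_zero (hq a).ne', Real.log_one]
    ring
  have hsplit : ∑ a, c a * (Real.log (p a / q a) + q a / p a - 1)
      = ∑ a, c a * Real.log (p a / q a) + ∑ a, c a * (q a / p a - 1) := by
    rw [← sum_add_distrib]; congr 1; funext a; ring
  have hWdef : W = ∑ a, q a * w a - ∑ a, p a * w a := by
    rw [hW, ← sum_sub_distrib]; congr 1; funext a; ring
  rw [hdec] at step2
  linarith

open Finset in
/-- Regret bound for optimistic FTRL with the log-barrier regularizer
`p ↦ ∑ a, (1/η t a) · ln(1/p a)` over the probability simplex on a finite set `A`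
(policy optimization at a fixed state). -/
theorem oftrl_log_barrier_policy
    {A : Type*} [Fintype A] [Nonempty A]
    (T : ℕ) (hT : 1 ≤ T)
    (η : ℕ → A → ℝ)
    (hηpos : ∀ t ∈ Finset.Icc 1 (T + 1), ∀ a, 0 < η t a)
    (hηdec : ∀ t ∈ Finset.Icc 1 T, ∀ a, η (t + 1) a ≤ η t a)
    (η₁ : ℝ) (hη1 : ∀ a, η 1 a = η₁)
    (ℓ : ℕ → A → ℝ) (x : ℕ → ℝ) (m : ℕ → A → ℝ)
    (p : ℕ → A → ℝ)
    (hppos : ∀ t ∈ Finset.Icc 1 (T + 1), ∀ a, 0 < p t a)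
    (hpsum : ∀ t ∈ Finset.Icc 1 (T + 1), ∑ a, p t a = 1)
    (hmin : ∀ t ∈ Finset.Icc 1 (T + 1), ∀ q : A → ℝ, (∀ a, 0 < q a) → ∑ a, q a = 1 →
      (∑ a, p t a * ((∑ τ ∈ Finset.Icc 1 (t - 1), ℓ τ a) + m t a))
          + ∑ a, (1 / η t a) * Real.log (1 / p t a) ≤
        (∑ a, q a * ((∑ τ ∈ Finset.Icc 1 (t - 1), ℓ τ a) + m t a))
          + ∑ a, (1 / η t a) * Real.log (1 / q a))
    (hcond : ∀ t ∈ Finset.Icc 1 T, ∀ a,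
      η t a * p t a * (ℓ t a - m t a + x t) ≥ -(1 / 2))
    (u : A → ℝ) (hunonneg : ∀ a, 0 ≤ u a) (husum : ∑ a, u a = 1) :
    ∑ t ∈ Finset.Icc 1 T, ∑ a, (p t a - u a) * ℓ t a ≤
      (Fintype.card A : ℝ) * Real.log ((Fintype.card A : ℝ) * T ^ 2) / η₁
      + ∑ t ∈ Finset.Icc 1 T, ∑ a,
          (1 / η (t + 1) a - 1 / η t a) * Real.log ((Fintype.card A : ℝ) * T ^ 2)
      + ∑ t ∈ Finset.Icc 1 T, ∑ a, η t a * (p t a) ^ 2 * (ℓ t a - m t a + x t) ^ 2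
      + (1 / (T : ℝ) ^ 2) * ∑ t ∈ Finset.Icc 1 T, ∑ a,
          (-u a + 1 / (Fintype.card A : ℝ)) * ℓ t a
      + 2 * (⨆ a, |m (T + 1) a|) := by
  classical
  set N : ℝ := (Fintype.card A : ℝ) with hNdef
  have hN : 0 < N := by
    rw [hNdef]; exact_mod_cast Fintype.card_pos
  have hTR : (1:ℝ) ≤ (T:ℝ) := by exact_mod_cast hT
  have hT2 : (0:ℝ) < (T:ℝ)^2 := by positivity
  set C : ℝ := Real.log (N * (T:ℝ)^2) with hCdef
  -- membership helpers
  have hmem : ∀ t ∈ Icc 1 T, t ∈ Icc 1 (T+1) := by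
    intro t ht; rw [mem_Icc] at *; omega
  have hmem' : ∀ t ∈ Icc 1 T, t + 1 ∈ Icc 1 (T+1) := by
    intro t ht; rw [mem_Icc] at *; omega
  have hT1mem : T + 1 ∈ Icc 1 (T+1) := by rw [mem_Icc]; omega
  -- p ≤ 1
  have hple : ∀ t ∈ Icc 1 (T+1), ∀ a, p t a ≤ 1 := by
    intro t ht a
    have h1 := Finset.single_le_sum (f := p t) (fun b _ => (hppos t ht b).le) (mem_univ a)
    rw [hpsum t ht] at h1
    exact h1
  -- the shifted comparator
  set v : A → ℝ := fun a => (1 - 1/(T:ℝ)^2) * u a + 1/(N * (T:ℝ)^2) with hvdef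
  have hvpos : ∀ a, 0 < v a := by
    intro a
    have h1 : 0 ≤ 1 - 1/(T:ℝ)^2 := by
      rw [sub_nonneg, div_le_one hT2]; nlinarith
    have : (0:ℝ) < 1/(N * (T:ℝ)^2) := by positivity
    have := mul_nonneg h1 (hunonneg a)
    rw [hvdef]; dsimp only; linarith
  have hvsum : ∑ a, v a = 1 := by
    rw [hvdef]
    rw [Finset.sum_add_distrib, ← Finset.mul_sum, husum, Finset.sum_const, card_univ]
    rw [nsmul_eq_mul, ← hNdef]
    field_simp
    ring
  have hvlb : ∀ a, 1/(N * (T:ℝ)^2) ≤ v a := by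
    intro a
    have h1 : 0 ≤ 1 - 1/(T:ℝ)^2 := by
      rw [sub_nonneg, div_le_one hT2]; nlinarith
    have := mul_nonneg h1 (hunonneg a)
    rw [hvdef]; dsimp only; linarith
  have hlogv : ∀ a, Real.log (1 / v a) ≤ C := by
    intro a
    have h1 : 1 / v a ≤ 1 / (1/(N * (T:ℝ)^2)) :=
      one_div_le_one_div_of_le (by positivity) (hvlb a)
    rw [one_div_one_div] at h1
    rw [hCdef]
    exact Real.log_le_log (one_div_pos.mpr (hvpos a)) h1
  -- local definitions
  set L : ℕ → A → ℝ := fun t a => ∑ τ ∈ Icc 1 t, ℓ τ a with hLdef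
  set ψ : ℕ → ℝ := fun t => ∑ a, (1/η t a) * Real.log (1/p t a) with hψdef
  set S : ℕ → ℝ := fun t => (∑ a, p t a * L (t-1) a) + ψ t with hSdef

  -- telescoping helper
  have teleg : ∀ (f : ℕ → ℝ) (n : ℕ), ∑ t ∈ Icc 1 n, (f (t+1) - f t) = f (n+1) - f 1 := by
    intro f n
    induction n with
    | zero =>
      rw [show Icc 1 0 = (∅ : Finset ℕ) from Finset.Icc_eq_empty (by omega)]
      simp
    | succ k ih =>
      rw [Finset.sum_Icc_succ_top (by omega : 1 ≤ k + 1), ih]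
      ring
  have tele : ∀ (f : ℕ → ℝ), ∑ t ∈ Icc 1 T, (f (t+1) - f t) = f (T+1) - f 1 :=
    fun f => teleg f T
  -- the per-round bound
  have hstep : ∀ t ∈ Icc 1 T, S t + (∑ a, p t a * ℓ t a) - S (t+1)
      ≤ ∑ a, η t a * (p t a)^2 * (ℓ t a - m t a + x t)^2 := by
    intro t ht
    have ht1 : t ∈ Icc 1 (T+1) := hmem t ht
    have ht2 : t + 1 ∈ Icc 1 (T+1) := hmem' t ht
    have htge : 1 ≤ t := (mem_Icc.mp ht).1
    have hLsucc : ∀ a, L t a = L (t-1) a + ℓ t a := by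
      intro a
      rw [hLdef]
      dsimp only
      have h1 : t = (t - 1) + 1 := by omega
      rw [h1, Finset.sum_Icc_succ_top (by omega : 1 ≤ t - 1 + 1)]
      rw [← h1]
    -- (b) optimality step via ftrl_opt
    have hopt := ftrl_opt (fun a => L (t-1) a + m t a) (fun a => 1 / η t a)
      (p t) (p (t+1))
      (fun a => by have := hηpos t ht1 a; positivity)
      (hppos t ht1) (hppos (t+1) ht2) (hpsum t ht1) (hpsum (t+1) ht2)
      (fun r hr hrs => hmin t ht1 r hr hrs)
    -- (a) regularizer monotonicity at p (t+1)
    have hψmono : ∑ a, (1 / η t a) * Real.log (1 / p (t+1) a) ≤ ψ (t+1) := by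
      rw [hψdef]
      apply Finset.sum_le_sum
      intro a _
      have hlog : 0 ≤ Real.log (1 / p (t+1) a) := by
        apply Real.log_nonneg
        rw [le_one_div (by norm_num) (hppos (t+1) ht2 a)]
        simpa using hple (t+1) ht2 a
      apply mul_le_mul_of_nonneg_right _ hlog
      apply one_div_le_one_div_of_le (hηpos (t+1) ht2 a) (hηdec t ht a)
    -- (c) stability
    have hstab : ∑ a, ((p t a - p (t+1) a) * (ℓ t a - m t a + x t)
        - (1 / η t a) * (Real.log (p t a / p (t+1) a) + p (t+1) a / p t a - 1))
        ≤ ∑ a, η t a * (p t a)^2 * (ℓ t a - m t a + x t)^2 := by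
      apply Finset.sum_le_sum
      intro a _
      exact stab_pointwise (hppos t ht1 a) (hppos (t+1) ht2 a) (hηpos t ht1 a)
        (hcond t ht a)
    -- expansions
    have hx0 : ∑ a, (p t a - p (t+1) a) * x t = 0 := by
      rw [← Finset.sum_mul, Finset.sum_sub_distrib, hpsum t ht1, hpsum (t+1) ht2]
      ring
    have hstabexp : ∑ a, ((p t a - p (t+1) a) * (ℓ t a - m t a + x t)
        - (1 / η t a) * (Real.log (p t a / p (t+1) a) + p (t+1) a / p t a - 1))
        = (∑ a, p t a * ℓ t a) - (∑ a, p (t+1) a * ℓ t a)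
          - (∑ a, p t a * m t a) + (∑ a, p (t+1) a * m t a)
          + (∑ a, (p t a - p (t+1) a) * x t)
          - ∑ a, (1 / η t a) * (Real.log (p t a / p (t+1) a) + p (t+1) a / p t a - 1) := by
      rw [show ∀ F G : A → ℝ, (∑ a, (F a - G a)) = (∑ a, F a) - (∑ a, G a) from
        fun F G => Finset.sum_sub_distrib F G]
      congr 1
      calc ∑ a, (p t a - p (t+1) a) * (ℓ t a - m t a + x t)
          = ∑ a, ((p t a * ℓ t a - p (t+1) a * ℓ t a - p t a * m t a
              + p (t+1) a * m t a) + (p t a - p (t+1) a) * x t) := by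
            apply Finset.sum_congr rfl; intro a _; ring
        _ = (∑ a, (p t a * ℓ t a - p (t+1) a * ℓ t a - p t a * m t a
              + p (t+1) a * m t a)) + ∑ a, (p t a - p (t+1) a) * x t :=
            Finset.sum_add_distrib
        _ = ((∑ a, (p t a * ℓ t a - p (t+1) a * ℓ t a - p t a * m t a))
              + ∑ a, p (t+1) a * m t a) + ∑ a, (p t a - p (t+1) a) * x t := by
            rw [Finset.sum_add_distrib]
        _ = (((∑ a, (p t a * ℓ t a - p (t+1) a * ℓ t a)) - ∑ a, p t a * m t a)
              + ∑ a, p (t+1) a * m t a) + ∑ a, (p t a - p (t+1) a) * x t := by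
            rw [Finset.sum_sub_distrib]
        _ = (∑ a, p t a * ℓ t a) - (∑ a, p (t+1) a * ℓ t a)
          - (∑ a, p t a * m t a) + (∑ a, p (t+1) a * m t a)
          + (∑ a, (p t a - p (t+1) a) * x t) := by
            rw [Finset.sum_sub_distrib]
    have hoptexp1 : ∑ a, p t a * (L (t-1) a + m t a)
        = (∑ a, p t a * L (t-1) a) + ∑ a, p t a * m t a := by
      rw [← Finset.sum_add_distrib]; apply Finset.sum_congr rfl; intro a _; ring
    have hoptexp2 : ∑ a, p (t+1) a * (L (t-1) a + m t a)
        = (∑ a, p (t+1) a * L (t-1) a) + ∑ a, p (t+1) a * m t a := by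
      rw [← Finset.sum_add_distrib]; apply Finset.sum_congr rfl; intro a _; ring
    have hLt : ∑ a, p (t+1) a * L t a
        = (∑ a, p (t+1) a * L (t-1) a) + ∑ a, p (t+1) a * ℓ t a := by
      rw [← Finset.sum_add_distrib]; apply Finset.sum_congr rfl; intro a _
      rw [hLsucc a]; ring
    -- unfold S
    have hSt : S t = (∑ a, p t a * L (t-1) a) + ψ t := rfl
    have hSt1 : S (t+1) = (∑ a, p (t+1) a * L t a) + ψ (t+1) := by
      rw [hSdef]
      dsimp only
      have h1 : t + 1 - 1 = t := by omega
      rw [h1]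
    have hψt : ψ t = ∑ a, (1 / η t a) * Real.log (1 / p t a) := rfl
    rw [hSt, hSt1, hψt, hLt]
    rw [hoptexp1, hoptexp2] at hopt
    rw [hstabexp, hx0] at hstab
    linarith
  -- S 1 is nonnegative
  have hL0 : ∀ a, L 0 a = 0 := by
    intro a; rw [hLdef]; dsimp only; rw [show Icc 1 0 = (∅ : Finset ℕ) by
      apply Finset.Icc_eq_empty; omega]; simp
  have h1mem : 1 ∈ Icc 1 (T+1) := by rw [mem_Icc]; omega
  have hS1 : 0 ≤ S 1 := by
    rw [hSdef]
    dsimp only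
    have h1 : ∑ a, p 1 a * L (1-1) a = 0 := by
      apply Finset.sum_eq_zero; intro a _
      rw [show (1:ℕ) - 1 = 0 from rfl, hL0 a, mul_zero]
    rw [h1, zero_add, hψdef]
    apply Finset.sum_nonneg
    intro a _
    apply mul_nonneg
    · have := hηpos 1 h1mem a; positivity
    · apply Real.log_nonneg
      rw [le_one_div (by norm_num) (hppos 1 h1mem a)]
      simpa using hple 1 h1mem a
  -- supremum bound for m (T+1)
  set M : ℝ := ⨆ a, |m (T + 1) a| with hMdef
  have hMle : ∀ a, |m (T+1) a| ≤ M := by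
    intro a
    rw [hMdef]
    exact le_ciSup (f := fun a => |m (T+1) a|) (Set.Finite.bddAbove (Set.finite_range _)) a
  -- bound on S (T+1)
  have hST1 : S (T+1) ≤ (∑ a, v a * L T a) + (∑ a, (1 / η (T+1) a) * C) + 2 * M := by
    have hm := hmin (T+1) hT1mem v hvpos hvsum
    have hTT : T + 1 - 1 = T := by omega
    rw [hTT] at hm
    have he1 : ∑ a, p (T+1) a * ((∑ τ ∈ Icc 1 T, ℓ τ a) + m (T+1) a)
        = (∑ a, p (T+1) a * L T a) + ∑ a, p (T+1) a * m (T+1) a := by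
      rw [← Finset.sum_add_distrib]; apply Finset.sum_congr rfl; intro a _
      rw [hLdef]; ring
    have he2 : ∑ a, v a * ((∑ τ ∈ Icc 1 T, ℓ τ a) + m (T+1) a)
        = (∑ a, v a * L T a) + ∑ a, v a * m (T+1) a := by
      rw [← Finset.sum_add_distrib]; apply Finset.sum_congr rfl; intro a _
      rw [hLdef]; ring
    rw [he1, he2] at hm
    have hm1 : ∑ a, v a * m (T+1) a ≤ M := by
      calc ∑ a, v a * m (T+1) a ≤ ∑ a, v a * M := by
            apply Finset.sum_le_sum; intro a _
            apply mul_le_mul_of_nonneg_left _ (hvpos a).le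
            exact (le_abs_self _).trans (hMle a)
        _ = M := by rw [← Finset.sum_mul, hvsum, one_mul]
    have hm2 : -(∑ a, p (T+1) a * m (T+1) a) ≤ M := by
      have : ∑ a, p (T+1) a * (-(m (T+1) a)) ≤ M := by
        calc ∑ a, p (T+1) a * (-(m (T+1) a)) ≤ ∑ a, p (T+1) a * M := by
              apply Finset.sum_le_sum; intro a _
              apply mul_le_mul_of_nonneg_left _ (hppos (T+1) hT1mem a).le
              exact (neg_le_abs _).trans (hMle a)
          _ = M := by rw [← Finset.sum_mul, hpsum (T+1) hT1mem, one_mul]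
      calc -(∑ a, p (T+1) a * m (T+1) a) = ∑ a, p (T+1) a * (-(m (T+1) a)) := by
            rw [← Finset.sum_neg_distrib]; apply Finset.sum_congr rfl; intro a _; ring
        _ ≤ M := this
    have hψv : ∑ a, (1 / η (T+1) a) * Real.log (1 / v a)
        ≤ ∑ a, (1 / η (T+1) a) * C := by
      apply Finset.sum_le_sum; intro a _
      apply mul_le_mul_of_nonneg_left (hlogv a)
      have := hηpos (T+1) hT1mem a; positivity
    have hST1def : S (T+1) = (∑ a, p (T+1) a * L T a) + ψ (T+1) := by
      rw [hSdef]; dsimp only; rw [hTT]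
    have hψT1 : ψ (T+1) = ∑ a, (1 / η (T+1) a) * Real.log (1 / p (T+1) a) := rfl
    rw [hST1def, hψT1]
    linarith
  -- telescoping the learning rates
  have hηtel : ∑ a, (1 / η (T+1) a) * C
      = N * C / η₁ + ∑ t ∈ Icc 1 T, ∑ a, (1 / η (t+1) a - 1 / η t a) * C := by
    have hper : ∀ a : A, (1 / η (T+1) a) * C
        = (1 / η 1 a) * C + ∑ t ∈ Icc 1 T, (1 / η (t+1) a - 1 / η t a) * C := by
      intro a
      have h1 : ∑ t ∈ Icc 1 T, ((1 / η (t+1) a) * C - (1 / η t a) * C)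
          = (1 / η (T+1) a) * C - (1 / η 1 a) * C := tele (fun t => (1 / η t a) * C)
      have h2 : ∑ t ∈ Icc 1 T, (1 / η (t+1) a - 1 / η t a) * C
          = ∑ t ∈ Icc 1 T, ((1 / η (t+1) a) * C - (1 / η t a) * C) := by
        apply Finset.sum_congr rfl; intro t _; ring
      rw [h2, h1]; ring
    rw [Finset.sum_congr rfl (fun a _ => hper a), Finset.sum_add_distrib]
    congr 1
    · have : ∀ a : A, (1 / η 1 a) * C = (1/η₁) * C := by
        intro a; rw [hη1 a]
      rw [Finset.sum_congr rfl (fun a _ => this a), Finset.sum_const, card_univ,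
        nsmul_eq_mul, ← hNdef]
      ring
    · rw [Finset.sum_comm]
  -- comparator shift
  have hshift : ∑ t ∈ Icc 1 T, ∑ a, (p t a - u a) * ℓ t a
      = (∑ t ∈ Icc 1 T, ∑ a, (p t a - v a) * ℓ t a)
        + (1 / (T:ℝ)^2) * ∑ t ∈ Icc 1 T, ∑ a, (-u a + 1 / N) * ℓ t a := by
    rw [Finset.mul_sum]
    rw [← Finset.sum_add_distrib]
    apply Finset.sum_congr rfl; intro t _
    rw [Finset.mul_sum, ← Finset.sum_add_distrib]
    apply Finset.sum_congr rfl; intro a _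
    rw [hvdef]
    dsimp only
    have hTne : ((T:ℝ)^2) ≠ 0 := ne_of_gt hT2
    have hNne : N ≠ 0 := ne_of_gt hN
    field_simp
    ring
  -- rewrite regret vs v
  have hregv : ∑ t ∈ Icc 1 T, ∑ a, (p t a - v a) * ℓ t a
      = (∑ t ∈ Icc 1 T, ∑ a, p t a * ℓ t a) - ∑ a, v a * L T a := by
    have h1 : ∀ t, ∑ a, (p t a - v a) * ℓ t a
        = (∑ a, p t a * ℓ t a) - ∑ a, v a * ℓ t a := by
      intro t
      rw [← Finset.sum_sub_distrib]; apply Finset.sum_congr rfl; intro a _; ring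
    rw [Finset.sum_congr rfl (fun t _ => h1 t), Finset.sum_sub_distrib]
    congr 1
    rw [Finset.sum_comm]
    apply Finset.sum_congr rfl; intro a _
    rw [hLdef, Finset.mul_sum]
  -- put everything together
  have hsum : ∑ t ∈ Icc 1 T, (S t + (∑ a, p t a * ℓ t a) - S (t+1))
      ≤ ∑ t ∈ Icc 1 T, ∑ a, η t a * (p t a)^2 * (ℓ t a - m t a + x t)^2 :=
    Finset.sum_le_sum hstep
  have hteleS : ∑ t ∈ Icc 1 T, (S (t+1) - S t) = S (T+1) - S 1 := tele S
  have hsum2 : ∑ t ∈ Icc 1 T, (S t + (∑ a, p t a * ℓ t a) - S (t+1))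
      = (∑ t ∈ Icc 1 T, ∑ a, p t a * ℓ t a) - (S (T+1) - S 1) := by
    rw [← hteleS, ← Finset.sum_sub_distrib]
    apply Finset.sum_congr rfl; intro t _; ring
  rw [hshift, hregv]
  rw [hsum2] at hsum
  have key : ∑ t ∈ Icc 1 T, ∑ a, p t a * ℓ t a - ∑ a, v a * L T a
      ≤ N * C / η₁ + (∑ t ∈ Icc 1 T, ∑ a, (1 / η (t+1) a - 1 / η t a) * C)
        + (∑ t ∈ Icc 1 T, ∑ a, η t a * (p t a)^2 * (ℓ t a - m t a + x t)^2) + 2 * M := by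
    have k1 : ∑ t ∈ Icc 1 T, ∑ a, p t a * ℓ t a
        ≤ (∑ t ∈ Icc 1 T, ∑ a, η t a * (p t a)^2 * (ℓ t a - m t a + x t)^2)
          + (S (T+1) - S 1) := by linarith [hsum]
    have k2' : S (T+1) ≤ ∑ a, v a * L T a + ∑ a, (1 / η (T+1) a) * C + 2 * M := hST1
    have ktest : S (T+1) - S 1 ≤ S (T+1) := by linarith [hS1]
    have k2 : S (T+1) - S 1 ≤ ∑ a, v a * L T a + ∑ a, (1 / η (T+1) a) * C + 2 * M :=
      (sub_le_self _ hS1).trans k2'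
    have h5 := sub_le_sub_right k1 (∑ a, v a * L T a)
    have h6 := sub_le_sub_right (add_le_add_right k2
      (∑ t ∈ Icc 1 T, ∑ a, η t a * (p t a)^2 * (ℓ t a - m t a + x t)^2))
      (∑ a, v a * L T a)
    refine h5.trans (h6.trans_eq ?_)
    rw [hηtel]
    ring
  linarith [key]
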